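/- Let V ⊂ L²(ℝ^n) be the principal shift-invariant space generated by φ with respect to ℤ^n-translations, i.e., V = {f ∈ L² : f̂(ξ) = m(ξ)φ̂(ξ) a.e. for some measurable ℤ^n-periodic m}, and let Λ ⊇ ℤ^n be a full rank lattice. Then V is invariant under all translations by elements of Λ if and only if |K ∩ (k + K)| = 0 for all k ∈ ℤ^n \ Λ*, where K = supp φ̂ and |·| denotes Lebesgue measure. -/

import Mathlib

open MeasureTheory

/-- Integer points `ℤⁿ ⊆ ℝⁿ`. -/
def intPoints (n : ℕ) : Set (EuclideanSpace ℝ (Fin n)) :=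
  {x | ∀ i, ∃ k : ℤ, x i = (k : ℝ)}

/-- Full rank lattice. -/
def IsFullLattice {n : ℕ} (L : AddSubgroup (EuclideanSpace ℝ (Fin n))) : Prop :=
  ∃ b : Module.Basis (Fin n) ℝ (EuclideanSpace ℝ (Fin n)),
    L = AddSubgroup.closure (Set.range b)

/-- Dual lattice of a set. -/
def dualSet {n : ℕ} (S : Set (EuclideanSpace ℝ (Fin n))) : Set (EuclideanSpace ℝ (Fin n)) :=
  {x | ∀ g ∈ S, ∃ k : ℤ, (inner ℝ x g : ℝ) = (k : ℝ)}

/-- The principal shift-invariant space generated by `φ`, described on the Fourier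
side: the set of (Fourier transforms of) its elements, i.e. `L²` functions of the
form `m · φ̂` with `m` measurable and `ℤⁿ`-periodic. -/
def hatPSI {n : ℕ} (φhat : EuclideanSpace ℝ (Fin n) → ℂ) :
    Set (EuclideanSpace ℝ (Fin n) → ℂ) :=
  {F | MemLp F 2 (volume : Measure (EuclideanSpace ℝ (Fin n))) ∧
    ∃ m : EuclideanSpace ℝ (Fin n) → ℂ, Measurable m ∧
      (∀ k ∈ intPoints n, ∀ ξ, m (ξ + k) = m ξ) ∧
      F =ᵐ[volume] fun ξ => m ξ * φhat ξ}

/-- On the Fourier side, translation of `f` by `y` acts on `f̂` as multiplication by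
the character `ξ ↦ e^{-2πi⟨y,ξ⟩}`. -/
noncomputable def modulate {n : ℕ} (y : EuclideanSpace ℝ (Fin n))
    (F : EuclideanSpace ℝ (Fin n) → ℂ) : EuclideanSpace ℝ (Fin n) → ℂ :=
  fun ξ => Complex.exp (-(2 * Real.pi * Complex.I * ((inner ℝ y ξ : ℝ) : ℂ))) * F ξ

namespace Stmt16Aux

open Complex


lemma intPoints_countable (n : ℕ) : (intPoints n).Countable := by
  have h : intPoints n ⊆ Set.range
      (fun v : Fin n → ℤ => (WithLp.toLp 2 (fun i => (v i : ℝ)) : EuclideanSpace ℝ (Fin n))) := by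
    intro x hx
    choose k hk using hx
    exact ⟨k, by ext i; simpa using (hk i).symm⟩
  exact (Set.countable_range _).mono h

lemma zero_mem_intPoints (n : ℕ) : (0 : EuclideanSpace ℝ (Fin n)) ∈ intPoints n :=
  fun i => ⟨0, by simp⟩

lemma add_mem_intPoints {n : ℕ} {x y : EuclideanSpace ℝ (Fin n)}
    (hx : x ∈ intPoints n) (hy : y ∈ intPoints n) : x + y ∈ intPoints n := by
  intro i
  obtain ⟨a, ha⟩ := hx i
  obtain ⟨b, hb⟩ := hy i
  exact ⟨a + b, by simp [ha, hb]⟩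

lemma neg_mem_intPoints {n : ℕ} {x : EuclideanSpace ℝ (Fin n)}
    (hx : x ∈ intPoints n) : -x ∈ intPoints n := by
  intro i
  obtain ⟨a, ha⟩ := hx i
  exact ⟨-a, by simp [ha]⟩

lemma sub_mem_intPoints {n : ℕ} {x y : EuclideanSpace ℝ (Fin n)}
    (hx : x ∈ intPoints n) (hy : y ∈ intPoints n) : x - y ∈ intPoints n := by
  rw [sub_eq_add_neg]; exact add_mem_intPoints hx (neg_mem_intPoints hy)

noncomputable def ch {n : ℕ} (y ξ : EuclideanSpace ℝ (Fin n)) : ℂ :=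
  Complex.exp (-(2 * Real.pi * Complex.I * ((inner ℝ y ξ : ℝ) : ℂ)))

lemma modulate_eq {n : ℕ} (y : EuclideanSpace ℝ (Fin n)) (F : EuclideanSpace ℝ (Fin n) → ℂ)
    (ξ : EuclideanSpace ℝ (Fin n)) : modulate y F ξ = ch y ξ * F ξ := rfl

lemma ch_continuous {n : ℕ} (y : EuclideanSpace ℝ (Fin n)) : Continuous (ch y) := by
  have h1 : Continuous fun ξ : EuclideanSpace ℝ (Fin n) => (inner ℝ y ξ : ℝ) :=
    continuous_const.inner continuous_id
  exact Complex.continuous_exp.comp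
    (((continuous_const.mul (Complex.continuous_ofReal.comp h1)).neg))

lemma ch_norm {n : ℕ} (y ξ : EuclideanSpace ℝ (Fin n)) : ‖ch y ξ‖ = 1 := by
  rw [ch, Complex.norm_exp]
  simp

lemma ch_shift {n : ℕ} {y d : EuclideanSpace ℝ (Fin n)} (j : ℤ)
    (hj : (inner ℝ y d : ℝ) = j) (ξ : EuclideanSpace ℝ (Fin n)) :
    ch y (ξ + d) = ch y ξ := by
  rw [ch, ch, inner_add_right, hj]
  push_cast
  rw [show -(2 * (Real.pi:ℂ) * I * (((inner ℝ y ξ : ℝ):ℂ) + (j:ℂ))) =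
      -(2 * (Real.pi:ℂ) * I * ((inner ℝ y ξ : ℝ):ℂ)) + ((-j : ℤ):ℂ) * (2 * (Real.pi:ℂ) * I) by
        push_cast; ring,
    Complex.exp_add, Complex.exp_int_mul_two_pi_mul_I, mul_one]

lemma image_add_eq_preimage {n : ℕ} (k : EuclideanSpace ℝ (Fin n))
    (S : Set (EuclideanSpace ℝ (Fin n))) :
    (fun ξ => k + ξ) '' S = (fun ξ => -k + ξ) ⁻¹' S := by
  ext x
  constructor
  · rintro ⟨y, hy, rfl⟩
    simpa using hy
  · intro hx
    exact ⟨-k + x, hx, add_neg_cancel_left k x⟩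

lemma backward {n : ℕ} (φhat : EuclideanSpace ℝ (Fin n) → ℂ)
    (hmeas : Measurable φhat)
    (Λ : AddSubgroup (EuclideanSpace ℝ (Fin n)))
    (H : ∀ k ∈ intPoints n \ dualSet (Λ : Set (EuclideanSpace ℝ (Fin n))),
        volume ({ξ | φhat ξ ≠ 0} ∩ ((fun ξ => k + ξ) '' {ξ | φhat ξ ≠ 0})) = 0) :
    ∀ lam ∈ Λ, ∀ F ∈ hatPSI φhat, modulate lam F ∈ hatPSI φhat := by
  classical
  intro lam hlam F hF
  obtain ⟨hF2, m, hmmeas, hmper, heq⟩ := hF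
  set K : Set (EuclideanSpace ℝ (Fin n)) := {ξ | φhat ξ ≠ 0} with hKdef
  have hKm : MeasurableSet K := by
    have h := (hmeas (measurableSet_singleton (0:ℂ))).compl
    exact h
  set N : Set (EuclideanSpace ℝ (Fin n)) :=
    ⋃ k ∈ (intPoints n \ dualSet (Λ : Set (EuclideanSpace ℝ (Fin n)))),
      (K ∩ ((fun ξ => k + ξ) '' K)) with hNdef
  have hcnt : (intPoints n \ dualSet (Λ : Set (EuclideanSpace ℝ (Fin n)))).Countable :=
    (intPoints_countable n).mono Set.diff_subset
  have hNnull : volume N = 0 := (measure_biUnion_null_iff hcnt).2 H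
  have hNm : MeasurableSet N := by
    refine MeasurableSet.biUnion hcnt (fun k _ => hKm.inter ?_)
    rw [image_add_eq_preimage]
    exact (measurable_id.const_add (-k)) hKm
  set K' : Set (EuclideanSpace ℝ (Fin n)) := K \ N with hK'def
  have hK'm : MeasurableSet K' := hKm.diff hNm
  have compat : ∀ ξ d, d ∈ intPoints n → ξ ∈ K' → ξ + d ∈ K' →
      ∃ j : ℤ, (inner ℝ lam d : ℝ) = (j:ℝ) := by
    intro ξ d hd hξ hξd
    by_cases hdD : d ∈ dualSet (Λ : Set (EuclideanSpace ℝ (Fin n)))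
    · obtain ⟨j, hj⟩ := hdD lam hlam
      exact ⟨j, by rwa [real_inner_comm] at hj⟩
    · refine absurd (Set.mem_biUnion (show d ∈ _ \ _ from ⟨hd, hdD⟩) ?_) hξd.2
      exact Set.mem_inter hξd.1 ⟨ξ, hξ.1, add_comm d ξ⟩
  obtain ⟨e, he⟩ := (intPoints_countable n).exists_eq_range ⟨0, zero_mem_intPoints n⟩
  have heMem : ∀ j, e j ∈ intPoints n := fun j => he ▸ Set.mem_range_self j
  set q : ℕ → EuclideanSpace ℝ (Fin n) → Prop := fun j ξ => ξ + e j ∈ K' with hqdef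
  have hqm : ∀ j, MeasurableSet {ξ | q j ξ} := fun j =>
    (measurable_id.add_const (e j)) hK'm
  set p : ℕ → EuclideanSpace ℝ (Fin n) → Prop :=
    fun j ξ => q j ξ ∨ ∀ i, ¬ q i ξ with hpdef
  have hpm : ∀ j, MeasurableSet {ξ | p j ξ} := by
    intro j
    have : {ξ | p j ξ} = {ξ | q j ξ} ∪ ⋂ i, {ξ | q i ξ}ᶜ := by
      ext ξ; simp [hpdef, Set.mem_iInter]
    rw [this]
    exact (hqm j).union (MeasurableSet.iInter fun i => (hqm i).compl)
  have hp : ∀ ξ, ∃ j, p j ξ := by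
    intro ξ
    by_cases hc : ∃ j, q j ξ
    · exact ⟨hc.choose, Or.inl hc.choose_spec⟩
    · push_neg at hc
      exact ⟨0, Or.inr hc⟩
  set f : ℕ → EuclideanSpace ℝ (Fin n) → ℂ :=
    fun j ξ => if q j ξ then ch lam (ξ + e j) * m ξ else 0 with hfdef
  have hfm : ∀ j, Measurable (f j) := fun j =>
    Measurable.ite (hqm j)
      (((ch_continuous lam).measurable.comp (measurable_id.add_const (e j))).mul hmmeas)
      measurable_const
  set m' : EuclideanSpace ℝ (Fin n) → ℂ := fun ξ => f (Nat.find (hp ξ)) ξ with hm'def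
  have hm'meas : Measurable m' := Measurable.find hfm hpm hp
  have hfind : ∀ ξ j0, q j0 ξ → q (Nat.find (hp ξ)) ξ := by
    intro ξ j0 hj0
    rcases Nat.find_spec (hp ξ) with h | h
    · exact h
    · exact absurd hj0 (h j0)
  have hm'zero : ∀ ξ, (∀ i, ¬ q i ξ) → m' ξ = 0 := by
    intro ξ hno
    rw [hm'def]
    exact if_neg (hno _)
  have hm'val : ∀ ξ, q (Nat.find (hp ξ)) ξ →
      m' ξ = ch lam (ξ + e (Nat.find (hp ξ))) * m ξ := by
    intro ξ hq
    rw [hm'def]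
    exact if_pos hq
  -- periodicity
  have hper : ∀ k ∈ intPoints n, ∀ ξ, m' (ξ + k) = m' ξ := by
    intro k hk ξ
    by_cases hex : ∃ j, q j ξ
    · obtain ⟨j0, hj0⟩ := hex
      have hmem : e j0 - k ∈ intPoints n := sub_mem_intPoints (heMem j0) hk
      obtain ⟨j0', hj0'⟩ := (he ▸ hmem : e j0 - k ∈ Set.range e)
      have hq' : q j0' (ξ + k) := by
        show ξ + k + e j0' ∈ K'
        rw [hj0', show ξ + k + (e j0 - k) = ξ + e j0 from by abel]
        exact hj0
      have hq1 : q (Nat.find (hp (ξ + k))) (ξ + k) := hfind _ _ hq'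
      have hq2 : q (Nat.find (hp ξ)) ξ := hfind _ _ hj0
      set j1 := Nat.find (hp (ξ + k))
      set j2 := Nat.find (hp ξ)
      have hd : k + e j1 - e j2 ∈ intPoints n :=
        sub_mem_intPoints (add_mem_intPoints hk (heMem j1)) (heMem j2)
      have harr : (ξ + e j2) + (k + e j1 - e j2) = ξ + k + e j1 := by abel
      have hK2 : (ξ + e j2) + (k + e j1 - e j2) ∈ K' := by rw [harr]; exact hq1
      obtain ⟨j, hj⟩ := compat (ξ + e j2) (k + e j1 - e j2) hd hq2 hK2
      have hch : ch lam (ξ + k + e j1) = ch lam (ξ + e j2) := by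
        rw [← harr]
        exact ch_shift j hj (ξ + e j2)
      rw [hm'val (ξ + k) hq1, hm'val ξ hq2, hch, hmper k hk ξ]
    · have hex' : ¬ ∃ j, q j (ξ + k) := by
        rintro ⟨j, hj⟩
        apply hex
        have hmem : k + e j ∈ intPoints n := add_mem_intPoints hk (heMem j)
        obtain ⟨j', hj'⟩ := (he ▸ hmem : k + e j ∈ Set.range e)
        refine ⟨j', ?_⟩
        show ξ + e j' ∈ K'
        rw [hj', show ξ + (k + e j) = ξ + k + e j from by abel]
        exact hj
      push_neg at hex hex'
      rw [hm'zero _ hex', hm'zero _ hex]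
  -- a.e. equality
  have hae : modulate lam F =ᵐ[volume] fun ξ => m' ξ * φhat ξ := by
    have h2 : ∀ᵐ ξ ∂(volume : Measure (EuclideanSpace ℝ (Fin n))), ξ ∉ N :=
      measure_eq_zero_iff_ae_notMem.mp hNnull
    filter_upwards [heq, h2] with ξ hFξ hξN
    rw [modulate_eq, hFξ]
    by_cases hK0 : φhat ξ = 0
    · simp [hK0]
    · have hξK' : ξ ∈ K' := ⟨hK0, hξN⟩
      obtain ⟨j0, hj0⟩ := (he ▸ zero_mem_intPoints n : (0 : EuclideanSpace ℝ (Fin n)) ∈ Set.range e)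
      have hq0 : q j0 ξ := by
        show ξ + e j0 ∈ K'
        rw [hj0, add_zero]
        exact hξK'
      have hq1 : q (Nat.find (hp ξ)) ξ := hfind _ _ hq0
      obtain ⟨j, hj⟩ := compat ξ (e (Nat.find (hp ξ))) (heMem _) hξK' hq1
      rw [hm'val ξ hq1, ch_shift j hj ξ]
      ring
  -- MemLp
  have hnorm : ∀ ξ, ‖modulate lam F ξ‖ = ‖F ξ‖ := by
    intro ξ
    rw [modulate_eq, norm_mul, ch_norm, one_mul]
  have hmem2 : MemLp (modulate lam F) 2 (volume : Measure (EuclideanSpace ℝ (Fin n))) := by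
    refine ⟨(ch_continuous lam).aestronglyMeasurable.mul hF2.1, ?_⟩
    rw [eLpNorm_congr_norm_ae (Filter.Eventually.of_forall hnorm)]
    exact hF2.2
  exact ⟨hmem2, m', hm'meas, hper, hae⟩

lemma ch_inj {n : ℕ} {y d : EuclideanSpace ℝ (Fin n)} {ξ : EuclideanSpace ℝ (Fin n)}
    (h : ch y (ξ + d) = ch y ξ) : ∃ j : ℤ, (inner ℝ y d : ℝ) = j := by
  rw [ch, ch, inner_add_right, Complex.exp_eq_exp_iff_exists_int] at h
  obtain ⟨j, hj⟩ := h
  refine ⟨-j, ?_⟩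
  have h2 : (2 * (Real.pi:ℂ) * I) * (((inner ℝ y d : ℝ):ℂ) - ((-j : ℤ):ℂ)) = 0 := by
    push_cast at hj ⊢
    linear_combination -hj
  rcases mul_eq_zero.1 h2 with h3 | h3
  · exact absurd h3 (by simp [Real.pi_ne_zero, Complex.I_ne_zero, mul_eq_zero])
  · have h4 := sub_eq_zero.1 h3
    exact_mod_cast h4

lemma forward {n : ℕ} (φhat : EuclideanSpace ℝ (Fin n) → ℂ)
    (hφ : MemLp φhat 2 (volume : Measure (EuclideanSpace ℝ (Fin n))))
    (Λ : AddSubgroup (EuclideanSpace ℝ (Fin n)))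
    (H : ∀ lam ∈ Λ, ∀ F ∈ hatPSI φhat, modulate lam F ∈ hatPSI φhat) :
    ∀ k ∈ intPoints n \ dualSet (Λ : Set (EuclideanSpace ℝ (Fin n))),
      volume ({ξ | φhat ξ ≠ 0} ∩ ((fun ξ => k + ξ) '' {ξ | φhat ξ ≠ 0})) = 0 := by
  intro k hk
  obtain ⟨hkZ, hkD⟩ := hk
  simp only [dualSet, Set.mem_setOf_eq] at hkD
  push_neg at hkD
  obtain ⟨lam, hlamΛ, hlam⟩ := hkD
  have hφmem : φhat ∈ hatPSI φhat :=
    ⟨hφ, fun _ => 1, measurable_const, fun _ _ _ => rfl,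
      Filter.Eventually.of_forall (by simp)⟩
  obtain ⟨hF2, m, hmmeas, hmper, heq⟩ := H lam hlamΛ φhat hφmem
  set A := {ξ | ¬ modulate lam φhat ξ = m ξ * φhat ξ} with hAdef
  have hA : volume A = 0 := ae_iff.mp heq
  have hA' : volume ((fun ξ => k + ξ) '' A) = 0 := by
    rw [image_add_eq_preimage, measure_preimage_add]
    exact hA
  refine measure_mono_null ?_ (measure_union_null hA hA')
  rintro ξ ⟨hξK, η, hηK, rfl⟩
  by_contra hmem
  obtain ⟨h1, h2⟩ := not_or.mp hmem
  have hηA : η ∉ A := fun hη => h2 ⟨η, hη, rfl⟩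
  have e1 : modulate lam φhat (k + η) = m (k + η) * φhat (k + η) := not_not.mp h1
  have e2 : modulate lam φhat η = m η * φhat η := not_not.mp hηA
  rw [modulate_eq] at e1 e2
  have c1 : ch lam (k + η) = m (k + η) := mul_right_cancel₀ hξK e1
  have c2 : ch lam η = m η := mul_right_cancel₀ hηK e2
  have hmk : m (k + η) = m η := by rw [add_comm]; exact hmper k hkZ η
  have : ch lam (η + k) = ch lam η := by rw [add_comm η k, c1, hmk, c2]
  obtain ⟨j, hj⟩ := ch_inj this
  exact hlam j (by rwa [real_inner_comm] at hj)


end Stmt16Aux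

/-- the principal `ℤⁿ`-SI space generated by `φ` is invariant under all
translations by `Λ ⊇ ℤⁿ` iff `|K ∩ (k + K)| = 0` for all `k ∈ ℤⁿ \ Λ*`,
where `K = supp φ̂`. -/
theorem stmt16 {n : ℕ} (φhat : EuclideanSpace ℝ (Fin n) → ℂ)
    (hmeas : Measurable φhat)
    (hφ : MemLp φhat 2 (volume : Measure (EuclideanSpace ℝ (Fin n))))
    (Λ : AddSubgroup (EuclideanSpace ℝ (Fin n))) (hΛ : IsFullLattice Λ)
    (hZΛ : intPoints n ⊆ (Λ : Set (EuclideanSpace ℝ (Fin n)))) :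
    (∀ lam ∈ Λ, ∀ F ∈ hatPSI φhat, modulate lam F ∈ hatPSI φhat) ↔
      ∀ k ∈ intPoints n \ dualSet (Λ : Set (EuclideanSpace ℝ (Fin n))),
        volume ({ξ | φhat ξ ≠ 0} ∩ ((fun ξ => k + ξ) '' {ξ | φhat ξ ≠ 0})) = 0 := by
  exact ⟨fun H => Stmt16Aux.forward φhat hφ Λ H,
    fun H => Stmt16Aux.backward φhat hmeas Λ H⟩
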